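/- (Minimal amplitude hypothesis for Lipschitz coefficients.) Let c : [0,H] → ℝ be Lipschitz continuous with c_m ≤ c(y) ≤ c_M for all y, and fix ε > 0 and μ₁ > 0. Then there exists r > 0, depending only on ε, c_m, c_M, H, μ₁ and the Lipschitz constant of c, such that for every μ ≥ μ₁, every λ ≥ (c_M + ε)μ², and every normalized Dirichlet solution u (with flux v) of the reduced problem with parameters (μ,λ): u(y)² + v(y)² ≥ r² for all y ∈ [0,H]. -/

import Mathlib

open MeasureTheory Set Filter Topology

noncomputable section

/-- Fubini symmetrization: the integral of `f` times its primitive. -/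
lemma primitive_sq {f : ℝ → ℝ} {a b : ℝ} (hab : a ≤ b)
    (hf : IntervalIntegrable f volume a b) :
    ∫ t in a..b, f t * (∫ s in a..t, f s) = (∫ s in a..b, f s) ^ 2 / 2 := by
  set ν := volume.restrict (Ioc a b) with hν
  have hfi : Integrable f ν := (intervalIntegrable_iff_integrableOn_Ioc_of_le hab).1 hf
  set D : Set (ℝ × ℝ) := {p | p.2 ≤ p.1} with hD
  have hDm : MeasurableSet D := measurableSet_le measurable_snd measurable_fst
  set k : ℝ × ℝ → ℝ := D.indicator (fun p => f p.1 * f p.2) with hk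
  have hki : Integrable k (ν.prod ν) := (hfi.mul_prod hfi).indicator hDm
  set I := ∫ s in a..b, f s with hI
  set S := ∫ t in a..b, f t * (∫ s in a..t, f s) with hS
  have hIν : I = ∫ s, f s ∂ν := by rw [hI, intervalIntegral.integral_of_le hab]
  -- first iterated integral equals S
  have h1 : ∫ t, (∫ s, k (t, s) ∂ν) ∂ν = S := by
    rw [hS, intervalIntegral.integral_of_le hab]
    apply integral_congr_ae
    filter_upwards [ae_restrict_mem measurableSet_Ioc] with t ht
    have : (fun s => k (t, s)) = (Iic t).indicator (fun s => f t * f s) := by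
      funext s
      simp only [hk, Set.indicator_apply, hD, Set.mem_setOf_eq, Set.mem_Iic]
    rw [this, integral_indicator measurableSet_Iic, hν, Measure.restrict_restrict measurableSet_Iic]
    have hset : Iic t ∩ Ioc a b = Ioc a t := by
      rw [Set.inter_comm, Set.Ioc_inter_Iic, min_eq_right ht.2]
    rw [hset, integral_const_mul, ← intervalIntegral.integral_of_le ht.1.le]
  -- second iterated integral
  have h2 : ∫ s, (∫ t, k (t, s) ∂ν) ∂ν = I * I - S := by
    have hPc : ContinuousOn (fun t => ∫ s in a..t, f s) (Set.uIcc a b) :=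
      intervalIntegral.continuousOn_primitive_interval' hf left_mem_uIcc
    have hfP : IntervalIntegrable (fun t => f t * (∫ s in a..t, f s)) volume a b :=
      hf.mul_continuousOn hPc
    have hstep : ∀ s ∈ Ioc a b,
        (∫ t, k (t, s) ∂ν) = f s * I - f s * (∫ r in a..s, f r) := by
      intro s hs
      have : (fun t => k (t, s)) = (Ici s).indicator (fun t => f t * f s) := by
        funext t
        simp only [hk, Set.indicator_apply, hD, Set.mem_setOf_eq, Set.mem_Ici]
      rw [this, integral_indicator measurableSet_Ici, hν,
        Measure.restrict_restrict measurableSet_Ici]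
      have hset : Ici s ∩ Ioc a b = Icc s b := by
        ext t
        simp only [Set.mem_inter_iff, Set.mem_Ici, Set.mem_Ioc, Set.mem_Icc]
        constructor
        · rintro ⟨h1, _, h3⟩; exact ⟨h1, h3⟩
        · rintro ⟨h1, h2⟩; exact ⟨h1, hs.1.trans_le h1, h2⟩
      rw [hset, integral_mul_const, integral_Icc_eq_integral_Ioc]
      have hadd : (∫ r in a..s, f r) + (∫ r in s..b, f r) = I := by
        rw [hI]
        exact intervalIntegral.integral_add_adjacent_intervals
          (hf.mono_set (uIcc_subset_uIcc left_mem_uIcc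
            (by rw [Set.uIcc_of_le hab]; exact ⟨hs.1.le, hs.2⟩)))
          (hf.mono_set (uIcc_subset_uIcc
            (by rw [Set.uIcc_of_le hab]; exact ⟨hs.1.le, hs.2⟩) right_mem_uIcc))
      have : ∫ t in Ioc s b, f t = ∫ r in s..b, f r := by
        rw [intervalIntegral.integral_of_le hs.2]
      rw [this]
      have h5 : (∫ r in s..b, f r) = I - ∫ r in a..s, f r := by linarith
      rw [h5]; ring
    calc ∫ s, (∫ t, k (t, s) ∂ν) ∂ν
        = ∫ s, (f s * I - f s * (∫ r in a..s, f r)) ∂ν := by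
          apply integral_congr_ae
          filter_upwards [ae_restrict_mem measurableSet_Ioc] with s hs using hstep s hs
      _ = (∫ s, f s * I ∂ν) - ∫ s, f s * (∫ r in a..s, f r) ∂ν := by
          apply integral_sub (hfi.mul_const I)
          exact (intervalIntegrable_iff_integrableOn_Ioc_of_le hab).1 hfP
      _ = I * I - S := by
          have hSν : S = ∫ s, f s * (∫ r in a..s, f r) ∂ν := by
            rw [hS, intervalIntegral.integral_of_le hab]
          rw [integral_mul_const, ← hIν, ← hSν]
  -- swap
  have hswap : ∫ t, (∫ s, k (t, s) ∂ν) ∂ν = ∫ s, (∫ t, k (t, s) ∂ν) ∂ν := by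
    have : Integrable (Function.uncurry fun t s => k (t, s)) (ν.prod ν) := by
      exact hki
    exact integral_integral_swap this
  have key : S = I * I - S := by nth_rewrite 1 [← h1]; rw [hswap]; exact h2
  show S = I ^ 2 / 2
  linear_combination key / 2

/-- FTC-style identity for squares of primitives: if `F t = F x + ∫_x^t f` on `[x,z]`,
then `F z ^ 2 - F x ^ 2 = ∫_x^z 2 F f`. -/
lemma sq_sub_sq_eq_integral {f F : ℝ → ℝ} {x z : ℝ} (hxz : x ≤ z)
    (hf : IntervalIntegrable f volume x z)
    (hF : ∀ t ∈ Set.Icc x z, F t = F x + ∫ s in x..t, f s) :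
    F z ^ 2 - F x ^ 2 = ∫ t in x..z, 2 * F t * f t := by
  have hPc : ContinuousOn (fun t => ∫ s in x..t, f s) (Set.uIcc x z) :=
    intervalIntegral.continuousOn_primitive_interval' hf left_mem_uIcc
  have hfP : IntervalIntegrable (fun t => f t * (∫ s in x..t, f s)) volume x z :=
    hf.mul_continuousOn hPc
  have h1 : ∫ t in x..z, 2 * F t * f t
      = ∫ t in x..z, (2 * F x * f t + 2 * (f t * (∫ s in x..t, f s))) := by
    apply intervalIntegral.integral_congr
    intro t ht
    rw [Set.uIcc_of_le hxz] at ht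
    simp only []
    rw [hF t ht]; ring
  rw [h1, intervalIntegral.integral_add ((hf.const_mul _)) (hfP.const_mul _),
    intervalIntegral.integral_const_mul, intervalIntegral.integral_const_mul,
    primitive_sq hxz hf]
  have hz := hF z ⟨hxz, le_rfl⟩
  rw [hz]; ring

/-- `u` (with flux `v = c·u'` and weak derivative `g = u'`) is a solution of the reduced
problem `(c u')' + (λ - c μ²) u = 0` on the interval `[a, b]`:
`u` is absolutely continuous with derivative `g ∈ L²`, the flux `v` agrees a.e. with `c·g`,
and `v` is absolutely continuous with derivative `(c μ² - λ)·u`. -/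
def IsReducedSolutionOn (a b : ℝ) (c : ℝ → ℝ) (μ lam : ℝ) (u v g : ℝ → ℝ) : Prop :=
  IntervalIntegrable g volume a b ∧
  IntervalIntegrable (fun t => g t ^ 2) volume a b ∧
  (∀ y ∈ Set.Icc a b, u y = u a + ∫ t in a..y, g t) ∧
  (∀ᵐ y ∂volume.restrict (Set.Ioo a b), v y = c y * g y) ∧
  IntervalIntegrable (fun t => (c t * μ ^ 2 - lam) * u t) volume a b ∧
  (∀ y ∈ Set.Icc a b, v y = v a + ∫ t in a..y, (c t * μ ^ 2 - lam) * u t)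

/-- A coefficient on `[0, H]`: measurable and bounded between `cm` and `cM`. -/
def IsCoeff (H cm cM : ℝ) (c : ℝ → ℝ) : Prop :=
  Measurable c ∧ ∀ y ∈ Set.Icc (0 : ℝ) H, cm ≤ c y ∧ c y ≤ cM

set_option maxHeartbeats 2000000 in
/-- the minimal amplitude hypothesis holds for Lipschitz coefficients,
with `r` depending only on `ε, cm, cM, H, μ₁` and the Lipschitz constant `K`. -/
theorem stmt13 (cm cM H : ℝ) (hcm : 0 < cm) (hcmM : cm < cM) (hH : 0 < H)
    (K : NNReal) (ε μ₁ : ℝ) (hε : 0 < ε) (hμ₁ : 0 < μ₁) :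
    ∃ r > (0:ℝ),
      ∀ c : ℝ → ℝ, LipschitzOnWith K c (Set.Icc 0 H) →
      (∀ y ∈ Set.Icc (0 : ℝ) H, cm ≤ c y ∧ c y ≤ cM) →
      ∀ μ : ℝ, μ₁ ≤ μ → ∀ lam : ℝ, (cM + ε) * μ ^ 2 ≤ lam →
      ∀ u v g : ℝ → ℝ, IsReducedSolutionOn 0 H c μ lam u v g →
      u 0 = 0 → u H = 0 → (∫ y in (0:ℝ)..H, u y ^ 2) = 1 →
      ∀ y ∈ Set.Icc (0 : ℝ) H, r ^ 2 ≤ u y ^ 2 + v y ^ 2 := by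
  have hcM : (0:ℝ) < cM := hcm.trans hcmM
  have hcMε : (0:ℝ) < cM + ε := by linarith
  obtain ⟨C, hC⟩ : ∃ x : ℝ, x = 3 * (K : ℝ) * (cM + ε) / (ε * cm) := ⟨_, rfl⟩
  have hC0 : 0 ≤ C := by rw [hC]; positivity
  obtain ⟨Q, hQ⟩ : ∃ x : ℝ, x = Real.exp (-(2 * C * H)) * (ε * cm / ((cM + ε) * H)) := ⟨_, rfl⟩
  have hQpos : 0 < Q := by rw [hQ]; positivity
  obtain ⟨R, hRdef⟩ : ∃ x : ℝ, x = Q * min ((cM + ε) * μ₁ ^ 2) (1 / cM) := ⟨_, rfl⟩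
  have hRpos : 0 < R := by
    rw [hRdef]; exact mul_pos hQpos (lt_min (by positivity) (by positivity))
  refine ⟨Real.sqrt R, Real.sqrt_pos.2 hRpos, ?_⟩
  intro c hcLip hcB μ hμμ₁ lam hlam u v g hsol hu0 huH hnorm
  obtain ⟨hg, hg2, hu, hvcg, hh, hv⟩ := hsol
  have hμ : 0 < μ := hμ₁.trans_le hμμ₁
  have hlam0 : 0 < lam := lt_of_lt_of_le (by positivity) hlam
  obtain ⟨L, hL⟩ : ∃ x : ℝ, x = 3 * (K : ℝ) * lam := ⟨_, rfl⟩
  have hL0 : 0 ≤ L := by rw [hL]; positivity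
  obtain ⟨alo, halo⟩ : ∃ x : ℝ, x = ε / (cM + ε) * lam * cm := ⟨_, rfl⟩
  have halo0 : 0 < alo := by rw [halo]; positivity
  obtain ⟨A, hA⟩ : ∃ A' : ℝ → ℝ, A' = fun t => (lam - c t * μ ^ 2) * c t := ⟨_, rfl⟩
  obtain ⟨E, hE⟩ : ∃ E' : ℝ → ℝ, E' = fun t => v t ^ 2 + A t * u t ^ 2 := ⟨_, rfl⟩
  obtain ⟨hf, hhf⟩ : ∃ F : ℝ → ℝ, F = fun t => (c t * μ ^ 2 - lam) * u t := ⟨_, rfl⟩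
  rw [← hhf] at hh hv
  -- basic bounds on A
  have hcsub : ∀ t ∈ Set.Icc (0:ℝ) H, ε / (cM + ε) * lam ≤ lam - c t * μ ^ 2 := by
    intro t ht
    have h1 := (hcB t ht).2
    have h2 := (hcB t ht).1
    have key : c t * μ ^ 2 * (cM + ε) ≤ cM * lam := by nlinarith [sq_nonneg μ]
    rw [div_mul_eq_mul_div, div_le_iff₀ hcMε]
    nlinarith [key]
  have hA_lb : ∀ t ∈ Set.Icc (0:ℝ) H, alo ≤ A t := by
    intro t ht
    have h1 := hcsub t ht
    have h2 := (hcB t ht).1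
    have h3 : 0 < ε / (cM + ε) * lam := by positivity
    calc alo = ε / (cM + ε) * lam * cm := halo
      _ ≤ (lam - c t * μ ^ 2) * c t := by
          apply mul_le_mul h1 h2 hcm.le (by linarith)
      _ = A t := by rw [hA]
  have hA_ub : ∀ t ∈ Set.Icc (0:ℝ) H, A t ≤ lam * cM := by
    intro t ht
    have h1 := hcsub t ht
    have h2 := (hcB t ht).1
    have h3 := (hcB t ht).2
    have h4 : 0 < ε / (cM + ε) * lam := by positivity
    have h5 : 0 ≤ lam - c t * μ ^ 2 := by linarith
    rw [hA]
    show (lam - c t * μ ^ 2) * c t ≤ lam * cM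
    apply mul_le_mul (by nlinarith [sq_nonneg μ]) h3 (by linarith) hlam0.le
  have hA_lip : ∀ x ∈ Set.Icc (0:ℝ) H, ∀ z ∈ Set.Icc (0:ℝ) H, |A z - A x| ≤ L * |z - x| := by
    intro x hx z hz
    have hd : |c z - c x| ≤ (K : ℝ) * |z - x| := by
      have := hcLip.dist_le_mul z hz x hx
      rwa [Real.dist_eq, Real.dist_eq] at this
    have hq : A z - A x = (c z - c x) * (lam - μ ^ 2 * (c z + c x)) := by
      simp only [hA]; ring
    have e0 : cM * μ ^ 2 ≤ lam := by
      linarith [hlam, mul_nonneg hε.le (sq_nonneg μ)]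
    have hcx1 := (hcB x hx).1; have hcx2 := (hcB x hx).2
    have hcz1 := (hcB z hz).1; have hcz2 := (hcB z hz).2
    have hq1 : μ ^ 2 * (c z + c x) ≤ μ ^ 2 * (2 * cM) :=
      mul_le_mul_of_nonneg_left (by linarith) (sq_nonneg μ)
    have hq2 : 0 ≤ μ ^ 2 * (c z + c x) := mul_nonneg (sq_nonneg μ) (by linarith)
    have h2 : |lam - μ ^ 2 * (c z + c x)| ≤ 3 * lam := by
      rw [abs_le]; constructor
      · linarith [hq1, e0]
      · linarith [hq2, hlam0]
    calc |A z - A x| = |c z - c x| * |lam - μ ^ 2 * (c z + c x)| := by rw [hq, abs_mul]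
      _ ≤ ((K : ℝ) * |z - x|) * (3 * lam) := by
          apply mul_le_mul hd h2 (abs_nonneg _) (by positivity)
      _ = L * |z - x| := by rw [hL]; ring
  -- continuity
  have hIcc0H : Set.uIcc (0:ℝ) H = Set.Icc 0 H := Set.uIcc_of_le hH.le
  have hu_cont : ContinuousOn u (Set.Icc 0 H) := by
    have h1 : ContinuousOn (fun y => u 0 + ∫ t in (0:ℝ)..y, g t) (Set.Icc 0 H) := by
      apply ContinuousOn.add continuousOn_const
      have := intervalIntegral.continuousOn_primitive_interval' hg
        (Set.left_mem_uIcc (a := (0:ℝ)) (b := H))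
      rwa [hIcc0H] at this
    exact h1.congr fun y hy => hu y hy
  have hv_cont : ContinuousOn v (Set.Icc 0 H) := by
    have h1 : ContinuousOn (fun y => v 0 + ∫ t in (0:ℝ)..y, hf t) (Set.Icc 0 H) := by
      apply ContinuousOn.add continuousOn_const
      have := intervalIntegral.continuousOn_primitive_interval' hh
        (Set.left_mem_uIcc (a := (0:ℝ)) (b := H))
      rwa [hIcc0H] at this
    exact h1.congr fun y hy => hv y hy
  have hc_cont : ContinuousOn c (Set.Icc 0 H) := hcLip.continuousOn
  have hA_cont : ContinuousOn A (Set.Icc 0 H) := by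
    rw [hA]
    exact (continuousOn_const.sub (hc_cont.mul continuousOn_const)).mul hc_cont
  have hE_cont : ContinuousOn E (Set.Icc 0 H) := by
    rw [hE]
    exact (hv_cont.pow 2).add (hA_cont.mul (hu_cont.pow 2))
  -- key identity
  have hkey : ∀ x z : ℝ, 0 ≤ x → x ≤ z → z ≤ H →
      E z - E x = (∫ t in x..z, 2 * (A x - A t) * (u t * g t)) + (A z - A x) * u z ^ 2 := by
    intro x z h0x hxz hzH
    have hxH : x ≤ H := hxz.trans hzH
    have h0z : (0:ℝ) ≤ z := h0x.trans hxz
    have hss : Set.uIcc x z ⊆ Set.uIcc 0 H := by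
      rw [Set.uIcc_of_le hxz, hIcc0H]; exact Set.Icc_subset_Icc h0x hzH
    have hIccxz : Set.uIcc x z = Set.Icc x z := Set.uIcc_of_le hxz
    have hsubIcc : Set.Icc x z ⊆ Set.Icc (0:ℝ) H := Set.Icc_subset_Icc h0x hzH
    have hg' := hg.mono_set hss
    have hh' := hh.mono_set hss
    have huc' : ContinuousOn u (Set.uIcc x z) := hu_cont.mono (by rw [hIccxz]; exact hsubIcc)
    have hvc' : ContinuousOn v (Set.uIcc x z) := hv_cont.mono (by rw [hIccxz]; exact hsubIcc)
    have hAc' : ContinuousOn A (Set.uIcc x z) := hA_cont.mono (by rw [hIccxz]; exact hsubIcc)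
    have husub : ∀ t ∈ Set.Icc x z, u t = u x + ∫ s in x..t, g s := by
      intro t ht
      have htm : t ∈ Set.Icc (0:ℝ) H := hsubIcc ht
      have e1 := hu t htm
      have e2 := hu x ⟨h0x, hxH⟩
      have e3 : (∫ s in (0:ℝ)..x, g s) + ∫ s in x..t, g s = ∫ s in (0:ℝ)..t, g s := by
        apply intervalIntegral.integral_add_adjacent_intervals
        · exact hg.mono_set (by rw [Set.uIcc_of_le h0x, hIcc0H]; exact Set.Icc_subset_Icc le_rfl hxH)
        · exact hg.mono_set (by
            rw [Set.uIcc_of_le ht.1, hIcc0H]; exact Set.Icc_subset_Icc h0x htm.2)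
      rw [e1, e2]; linarith
    have hvsub : ∀ t ∈ Set.Icc x z, v t = v x + ∫ s in x..t, hf s := by
      intro t ht
      have htm : t ∈ Set.Icc (0:ℝ) H := hsubIcc ht
      have e1 := hv t htm
      have e2 := hv x ⟨h0x, hxH⟩
      have e3 : (∫ s in (0:ℝ)..x, hf s) + ∫ s in x..t, hf s = ∫ s in (0:ℝ)..t, hf s := by
        apply intervalIntegral.integral_add_adjacent_intervals
        · exact hh.mono_set (by rw [Set.uIcc_of_le h0x, hIcc0H]; exact Set.Icc_subset_Icc le_rfl hxH)
        · exact hh.mono_set (by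
            rw [Set.uIcc_of_le ht.1, hIcc0H]; exact Set.Icc_subset_Icc h0x htm.2)
      rw [e1, e2]; linarith
    have huu : u z ^ 2 - u x ^ 2 = ∫ t in x..z, 2 * u t * g t :=
      sq_sub_sq_eq_integral hxz hg' husub
    have hvv : v z ^ 2 - v x ^ 2 = ∫ t in x..z, 2 * v t * hf t :=
      sq_sub_sq_eq_integral hxz hh' hvsub
    have hug2 : IntervalIntegrable (fun t => 2 * u t * g t) volume x z := by
      have heq : (fun t => (2 * u t) * g t) = fun t => 2 * u t * g t := by funext t; ring
      rw [← heq]; exact hg'.continuousOn_mul (continuousOn_const.mul huc')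
    have hI2 : IntervalIntegrable (fun t => 2 * v t * hf t) volume x z := by
      have heq : (fun t => (2 * v t) * hf t) = fun t => 2 * v t * hf t := by funext t; ring
      rw [← heq]; exact hh'.continuousOn_mul (continuousOn_const.mul hvc')
    have hI3 : IntervalIntegrable (fun t => 2 * A t * (u t * g t)) volume x z := by
      have heq : (fun t => (2 * A t * u t) * g t) = fun t => 2 * A t * (u t * g t) := by
        funext t; ring
      rw [← heq]
      exact hg'.continuousOn_mul ((continuousOn_const.mul hAc').mul huc')
    have hzero : (∫ t in x..z, (2 * v t * hf t + 2 * A t * (u t * g t))) = 0 := by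
      rw [intervalIntegral.integral_of_le hxz, integral_Ioc_eq_integral_Ioo]
      apply integral_eq_zero_of_ae
      have hOoo : Set.Ioo x z ⊆ Set.Ioo 0 H := Set.Ioo_subset_Ioo h0x hzH
      have h5 := ae_restrict_of_ae_restrict_of_subset hOoo hvcg
      filter_upwards [h5] with t htv
      show 2 * v t * hf t + 2 * A t * (u t * g t) = 0
      rw [htv]; simp only [hhf, hA]; ring
    have hsum : (∫ t in x..z, 2 * v t * hf t) + (∫ t in x..z, 2 * A t * (u t * g t)) = 0 := by
      rw [← intervalIntegral.integral_add hI2 hI3]; exact hzero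
    have hsplit : (∫ t in x..z, 2 * (A x - A t) * (u t * g t))
        = A x * (∫ t in x..z, 2 * u t * g t) - ∫ t in x..z, 2 * A t * (u t * g t) := by
      rw [← intervalIntegral.integral_const_mul,
        ← intervalIntegral.integral_sub (hug2.const_mul (A x)) hI3]
      apply intervalIntegral.integral_congr
      intro t _
      show 2 * (A x - A t) * (u t * g t) = A x * (2 * u t * g t) - 2 * A t * (u t * g t)
      ring
    have hEz : E z - E x = (v z ^ 2 - v x ^ 2) + (A x * (u z ^ 2 - u x ^ 2)
        + (A z - A x) * u z ^ 2) := by simp only [hE]; ring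
    rw [hEz, hvv, huu, hsplit]
    linarith [hsum]
  -- the quantitative bound
  have hug_int : ∀ x z : ℝ, 0 ≤ x → x ≤ z → z ≤ H →
      IntervalIntegrable (fun t => |u t * g t|) volume x z := by
    intro x z h0x hxz hzH
    have hss : Set.uIcc x z ⊆ Set.uIcc 0 H := by
      rw [Set.uIcc_of_le hxz, hIcc0H]; exact Set.Icc_subset_Icc h0x hzH
    have huc' : ContinuousOn u (Set.uIcc x z) := hu_cont.mono (by
      rw [Set.uIcc_of_le hxz]; exact Set.Icc_subset_Icc h0x hzH)
    exact ((hg.mono_set hss).continuousOn_mul huc').abs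
  have hbound : ∀ x z : ℝ, 0 ≤ x → x ≤ z → z ≤ H →
      |E z - E x| ≤ (z - x) * (L * (2 * (∫ t in x..z, |u t * g t|) + u z ^ 2)) := by
    intro x z h0x hxz hzH
    have hxH : x ≤ H := hxz.trans hzH
    have h0z : (0:ℝ) ≤ z := h0x.trans hxz
    have hss : Set.uIcc x z ⊆ Set.uIcc 0 H := by
      rw [Set.uIcc_of_le hxz, hIcc0H]; exact Set.Icc_subset_Icc h0x hzH
    have hsubIcc : Set.Icc x z ⊆ Set.Icc (0:ℝ) H := Set.Icc_subset_Icc h0x hzH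
    have huc' : ContinuousOn u (Set.uIcc x z) := hu_cont.mono (by
      rw [Set.uIcc_of_le hxz]; exact hsubIcc)
    have hAc' : ContinuousOn A (Set.uIcc x z) := hA_cont.mono (by
      rw [Set.uIcc_of_le hxz]; exact hsubIcc)
    have hI1 : IntervalIntegrable (fun t => 2 * (A x - A t) * (u t * g t)) volume x z := by
      have heq : (fun t => (2 * (A x - A t) * u t) * g t)
          = fun t => 2 * (A x - A t) * (u t * g t) := by funext t; ring
      rw [← heq]
      exact (hg.mono_set hss).continuousOn_mul
        ((continuousOn_const.mul (continuousOn_const.sub hAc')).mul huc')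
    have habs_int := hug_int x z h0x hxz hzH
    have habs1 : |∫ t in x..z, 2 * (A x - A t) * (u t * g t)|
        ≤ ∫ t in x..z, (2 * L * (z - x)) * |u t * g t| := by
      refine (intervalIntegral.abs_integral_le_integral_abs hxz).trans ?_
      apply intervalIntegral.integral_mono_on hxz hI1.abs (habs_int.const_mul _)
      intro t ht
      have h6 := hA_lip x ⟨h0x, hxH⟩ t (hsubIcc ht)
      have h7 : |t - x| ≤ z - x := by rw [abs_of_nonneg (by linarith [ht.1])]; linarith [ht.2]
      have h8 : |A x - A t| ≤ L * (z - x) := by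
        rw [abs_sub_comm]; exact h6.trans (by nlinarith)
      calc |2 * (A x - A t) * (u t * g t)| = 2 * |A x - A t| * |u t * g t| := by
            rw [abs_mul, abs_mul]; simp [abs_of_nonneg]
        _ ≤ 2 * (L * (z - x)) * |u t * g t| := by
            apply mul_le_mul_of_nonneg_right (by linarith) (abs_nonneg _)
        _ = (2 * L * (z - x)) * |u t * g t| := by ring
    have h9 : |A z - A x| ≤ L * (z - x) := by
      have h9a := hA_lip x ⟨h0x, hxH⟩ z ⟨h0z, hzH⟩
      have h9b : |z - x| = z - x := abs_of_nonneg (by linarith)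
      rw [h9b] at h9a; exact h9a
    have h10 : (0:ℝ) ≤ ∫ t in x..z, |u t * g t| :=
      intervalIntegral.integral_nonneg hxz fun t _ => abs_nonneg _
    have h11 : (∫ t in x..z, (2 * L * (z - x)) * |u t * g t|)
        = (2 * L * (z - x)) * ∫ t in x..z, |u t * g t| :=
      intervalIntegral.integral_const_mul _ _
    rw [hkey x z h0x hxz hzH]
    calc |(∫ t in x..z, 2 * (A x - A t) * (u t * g t)) + (A z - A x) * u z ^ 2|
        ≤ |∫ t in x..z, 2 * (A x - A t) * (u t * g t)| + |(A z - A x) * u z ^ 2| :=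
          abs_add_le _ _
      _ ≤ (2 * L * (z - x)) * (∫ t in x..z, |u t * g t|) + (L * (z - x)) * u z ^ 2 := by
          apply add_le_add (habs1.trans_eq h11)
          rw [abs_mul, abs_of_nonneg (sq_nonneg (u z))]
          exact mul_le_mul_of_nonneg_right h9 (sq_nonneg _)
      _ = (z - x) * (L * (2 * (∫ t in x..z, |u t * g t|) + u z ^ 2)) := by ring
  -- energy lower bounds
  have hE_lb : ∀ t ∈ Set.Icc (0:ℝ) H, alo * u t ^ 2 ≤ E t := by
    intro t ht
    have h1 := hA_lb t ht
    have : alo * u t ^ 2 ≤ A t * u t ^ 2 := mul_le_mul_of_nonneg_right h1 (sq_nonneg _)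
    simp only [hE]; nlinarith [sq_nonneg (v t)]
  have hE0 : ∀ t ∈ Set.Icc (0:ℝ) H, 0 ≤ E t := by
    intro t ht
    have := hE_lb t ht
    nlinarith [sq_nonneg (u t), halo0]
  -- slope condition
  have hfrk : ∀ σ : ℝ, σ = 1 ∨ σ = -1 → ∀ x ∈ Set.Ico (0:ℝ) H, ∀ r', L * u x ^ 2 < r' →
      ∃ᶠ z in 𝓝[>] x, (z - x)⁻¹ * (σ * E z - σ * E x) < r' := by
    intro σ hσ x hx r' hr'
    have h0x : (0:ℝ) ≤ x := hx.1
    have hxH : x < H := hx.2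
    have hne : (𝓝[Set.Ioo x H] x).NeBot := by
      apply mem_closure_iff_nhdsWithin_neBot.mp
      rw [closure_Ioo (ne_of_lt hxH)]
      exact ⟨le_rfl, hxH.le⟩
    have hugH := hug_int x H h0x hxH.le le_rfl
    have hPcont : ContinuousWithinAt (fun z => ∫ t in x..z, |u t * g t|) (Set.Ioo x H) x := by
      have h1 := intervalIntegral.continuousOn_primitive_interval' hugH
        (Set.left_mem_uIcc (a := x) (b := H))
      exact (h1 x Set.left_mem_uIcc).mono (by
        rw [Set.uIcc_of_le hxH.le]; exact Set.Ioo_subset_Icc_self)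
    have hucontx : ContinuousWithinAt (fun z => u z ^ 2) (Set.Ioo x H) x := by
      have := (hu_cont.pow 2) x ⟨h0x, hxH.le⟩
      exact this.mono fun t ht => ⟨h0x.trans ht.1.le, ht.2.le⟩
    have h1 : Tendsto (fun z => ∫ t in x..z, |u t * g t|) (𝓝[Set.Ioo x H] x)
        (𝓝 (∫ t in x..x, |u t * g t|)) := hPcont
    rw [intervalIntegral.integral_same] at h1
    have htend : Tendsto (fun z => L * (2 * (∫ t in x..z, |u t * g t|) + u z ^ 2))
        (𝓝[Set.Ioo x H] x) (𝓝 (L * u x ^ 2)) := by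
      have h2 : Tendsto (fun z => u z ^ 2) (𝓝[Set.Ioo x H] x) (𝓝 (u x ^ 2)) := hucontx
      have := ((h1.const_mul 2).add h2).const_mul L
      simpa using this
    have hlt := htend.eventually_lt_const hr'
    have hmem : ∀ᶠ z in 𝓝[Set.Ioo x H] x, z ∈ Set.Ioo x H := eventually_mem_nhdsWithin
    have hev : ∀ᶠ z in 𝓝[Set.Ioo x H] x, (z - x)⁻¹ * (σ * E z - σ * E x) < r' := by
      filter_upwards [hlt, hmem] with z hz1 hz2
      have hzx : 0 < z - x := sub_pos.2 hz2.1
      have hb := hbound x z h0x hz2.1.le hz2.2.le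
      have hσb : σ * E z - σ * E x ≤ |E z - E x| := by
        rcases hσ with rfl | rfl
        · simpa using le_abs_self (E z - E x)
        · have : -1 * E z - -1 * E x = -(E z - E x) := by ring
          rw [this]; exact neg_le_abs _
      calc (z - x)⁻¹ * (σ * E z - σ * E x)
          ≤ (z - x)⁻¹ * ((z - x) * (L * (2 * (∫ t in x..z, |u t * g t|) + u z ^ 2))) :=
            mul_le_mul_of_nonneg_left (hσb.trans hb) (inv_nonneg.2 hzx.le)
        _ = L * (2 * (∫ t in x..z, |u t * g t|) + u z ^ 2) := by
            field_simp
        _ < r' := hz1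
    exact hev.frequently.filter_mono (nhdsWithin_mono x Set.Ioo_subset_Ioi_self)
  -- Gronwall bound hypothesis
  have hboundE : ∀ x ∈ Set.Ico (0:ℝ) H, L * u x ^ 2 ≤ C * E x + 0 := by
    intro x hx
    have h1 := hE_lb x (Set.Ico_subset_Icc_self hx)
    have hCalo : C * alo = L := by
      rw [hC, halo, hL]; field_simp
    have h2 : C * (alo * u x ^ 2) ≤ C * E x := mul_le_mul_of_nonneg_left h1 hC0
    have h3 : C * (alo * u x ^ 2) = L * u x ^ 2 := by rw [← hCalo]; ring
    linarith
  -- Gronwall upper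
  have hup : ∀ x ∈ Set.Icc (0:ℝ) H, E x ≤ E 0 * Real.exp (C * x) := by
    intro x hx
    have hres := le_gronwallBound_of_liminf_deriv_right_le (f := E)
      (f' := fun x => L * u x ^ 2) (δ := E 0) (K := C) (ε := 0) (a := 0) (b := H)
      hE_cont (fun x hx r' hr' => by simpa using hfrk 1 (Or.inl rfl) x hx r' hr')
      le_rfl hboundE x hx
    rwa [gronwallBound_ε0, sub_zero] at hres
  -- Gronwall lower
  have hlow : ∀ x ∈ Set.Icc (0:ℝ) H, E 0 * Real.exp (-C * x) ≤ E x := by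
    intro x hx
    have hneg : ∀ x ∈ Set.Ico (0:ℝ) H, L * u x ^ 2 ≤ (-C) * (-E x) + 0 := by
      intro x hx
      have := hboundE x hx
      nlinarith [this]
    have hres := le_gronwallBound_of_liminf_deriv_right_le (f := fun t => -E t)
      (f' := fun x => L * u x ^ 2) (δ := -E 0) (K := -C) (ε := 0) (a := 0) (b := H)
      hE_cont.neg (fun x hx r' hr' => by
        have := hfrk (-1) (Or.inr rfl) x hx r' hr'
        simpa [neg_mul] using this)
      le_rfl hneg x hx
    rw [gronwallBound_ε0, sub_zero] at hres
    have hres' : -E x ≤ -E 0 * Real.exp (-C * x) := hres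
    linarith [hres']
  -- maximum point of u²
  have hIccne : (Set.Icc (0:ℝ) H).Nonempty := ⟨0, le_rfl, hH.le⟩
  obtain ⟨y₀, hy₀, hy₀max⟩ := isCompact_Icc.exists_isMaxOn hIccne (hu_cont.pow 2)
  have hintu2 : IntervalIntegrable (fun y => u y ^ 2) volume 0 H := by
    apply ContinuousOn.intervalIntegrable
    rw [hIcc0H]; exact hu_cont.pow 2
  have h1H : 1 ≤ H * u y₀ ^ 2 := by
    have hint : (∫ y in (0:ℝ)..H, u y ^ 2) ≤ ∫ y in (0:ℝ)..H, u y₀ ^ 2 :=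
      intervalIntegral.integral_mono_on hH.le hintu2 intervalIntegrable_const
        fun t ht => hy₀max ht
    rw [hnorm] at hint
    simpa [intervalIntegral.integral_const, smul_eq_mul, mul_comm] using hint
  have hE00 : 0 ≤ E 0 := hE0 0 ⟨le_rfl, hH.le⟩
  -- conclusion
  intro y hy
  rw [Real.sq_sqrt hRpos.le]
  have hEy₀lb : alo / H ≤ E y₀ := by
    have h1 : 1 / H ≤ u y₀ ^ 2 := by rw [div_le_iff₀ hH]; linarith
    have h2 := hE_lb y₀ hy₀
    calc alo / H = alo * (1 / H) := by ring
      _ ≤ alo * u y₀ ^ 2 := mul_le_mul_of_nonneg_left h1 halo0.le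
      _ ≤ E y₀ := h2
  have hE0low : E y₀ * Real.exp (-(C * H)) ≤ E 0 := by
    have h2 := hup y₀ hy₀
    have hexp : Real.exp (C * y₀) ≤ Real.exp (C * H) := by
      apply Real.exp_le_exp.2
      nlinarith [hy₀.2, hC0, hy₀.1]
    have h3 : E y₀ ≤ E 0 * Real.exp (C * H) :=
      h2.trans (mul_le_mul_of_nonneg_left hexp hE00)
    calc E y₀ * Real.exp (-(C * H))
        ≤ (E 0 * Real.exp (C * H)) * Real.exp (-(C * H)) :=
          mul_le_mul_of_nonneg_right h3 (Real.exp_pos _).le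
      _ = E 0 := by rw [mul_assoc, ← Real.exp_add]; simp
  have hEy : E y₀ * Real.exp (-(2 * C * H)) ≤ E y := by
    have h4 := hlow y hy
    have h5 : Real.exp (-(C * H)) ≤ Real.exp (-C * y) := by
      apply Real.exp_le_exp.2
      nlinarith [hy.2, hC0]
    have hEy₀0 : 0 ≤ E y₀ := hE0 y₀ hy₀
    calc E y₀ * Real.exp (-(2 * C * H))
        = (E y₀ * Real.exp (-(C * H))) * Real.exp (-(C * H)) := by
          have hee : -(2 * C * H) = -(C * H) + -(C * H) := by ring
          rw [hee, Real.exp_add]; ring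
      _ ≤ E 0 * Real.exp (-(C * H)) :=
          mul_le_mul_of_nonneg_right hE0low (Real.exp_pos _).le
      _ ≤ E 0 * Real.exp (-C * y) := mul_le_mul_of_nonneg_left h5 hE00
      _ ≤ E y := h4
  have hBfinal : Q * lam ≤ v y ^ 2 + lam * cM * u y ^ 2 := by
    have h6 : alo / H * Real.exp (-(2 * C * H)) ≤ E y :=
      le_trans (mul_le_mul_of_nonneg_right hEy₀lb (Real.exp_pos _).le) hEy
    have h7 : E y ≤ v y ^ 2 + lam * cM * u y ^ 2 := by
      have := hA_ub y hy
      simp only [hE]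
      nlinarith [sq_nonneg (u y)]
    have h8 : Q * lam = alo / H * Real.exp (-(2 * C * H)) := by
      rw [hQ, halo]; field_simp
    linarith [h6, h7]
  have hμ₁lam : (cM + ε) * μ₁ ^ 2 ≤ lam := by
    have := mul_le_mul_of_nonneg_left (mul_self_le_mul_self hμ₁.le hμμ₁) hcMε.le
    nlinarith [this, hlam]
  rcases le_total (lam * cM) 1 with hc1 | hc1
  · have hmin : min ((cM + ε) * μ₁ ^ 2) (1 / cM) ≤ (cM + ε) * μ₁ ^ 2 := min_le_left _ _
    have hR1 : R ≤ Q * lam := by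
      rw [hRdef]
      calc Q * min ((cM + ε) * μ₁ ^ 2) (1 / cM) ≤ Q * ((cM + ε) * μ₁ ^ 2) :=
            mul_le_mul_of_nonneg_left hmin hQpos.le
        _ ≤ Q * lam := mul_le_mul_of_nonneg_left hμ₁lam hQpos.le
    have h9 : v y ^ 2 + lam * cM * u y ^ 2 ≤ u y ^ 2 + v y ^ 2 := by
      nlinarith [sq_nonneg (u y)]
    linarith [hBfinal]
  · have hmin : min ((cM + ε) * μ₁ ^ 2) (1 / cM) ≤ 1 / cM := min_le_right _ _
    have hR1 : R ≤ Q * (1 / cM) := by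
      rw [hRdef]
      exact mul_le_mul_of_nonneg_left hmin hQpos.le
    have h7 : Q * lam ≤ lam * cM * (u y ^ 2 + v y ^ 2) := by
      nlinarith [sq_nonneg (v y), hBfinal]
    have h8 : Q ≤ cM * (u y ^ 2 + v y ^ 2) := by
      have h7' : Q * lam ≤ (cM * (u y ^ 2 + v y ^ 2)) * lam := by nlinarith [h7]
      exact le_of_mul_le_mul_right (by linarith [h7']) hlam0
    have h10 : Q * (1 / cM) ≤ u y ^ 2 + v y ^ 2 := by
      rw [mul_one_div, div_le_iff₀ hcM]
      linarith [h8]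
    linarith
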